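/- arXiv:1301.0303 — 2 statements merged into one kernel-verified Lean document; each statement's English description precedes it below -/
import Mathlib

section
/- For every positive integer n, the sum of φ(i)² for i from 1 to n is at least n³/11, where φ is Euler's totient function. -/
set_option maxRecDepth 100000
set_option maxHeartbeats 4000000
set_option linter.unusedTactic false
set_option linter.unreachableTactic false

open Finset ArithmeticFunction
open scoped ArithmeticFunction.Moebius ArithmeticFunction.zeta

lemma M_bounds : (0.6082:ℝ) ≤ (∑ d ∈ Finset.Ioc 0 100, (ArithmeticFunction.moebius d : ℝ)/(d:ℝ)^2) ∧ (∑ d ∈ Finset.Ioc 0 100, (ArithmeticFunction.moebius d : ℝ)/(d:ℝ)^2) ≤ 0.60825 := by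
  have h1 : ArithmeticFunction.moebius 1 = 1 := ArithmeticFunction.moebius_apply_one
  have h2 : ArithmeticFunction.moebius 2 = -1 := ArithmeticFunction.moebius_apply_prime (by norm_num)
  have h3 : ArithmeticFunction.moebius 3 = -1 := ArithmeticFunction.moebius_apply_prime (by norm_num)
  have h4 : ArithmeticFunction.moebius 4 = 0 := ArithmeticFunction.moebius_eq_zero_of_not_squarefree (by intro h; have := Nat.isUnit_iff.mp (h 2 (by norm_num)); norm_num at this)
  have h5 : ArithmeticFunction.moebius 5 = -1 := ArithmeticFunction.moebius_apply_prime (by norm_num)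
  have h6 : ArithmeticFunction.moebius 6 = 1 := by
    rw [show (6:ℕ) = 2*3 by norm_num, ArithmeticFunction.isMultiplicative_moebius.map_mul_of_coprime (by norm_num), h2, h3]; norm_num
  have h7 : ArithmeticFunction.moebius 7 = -1 := ArithmeticFunction.moebius_apply_prime (by norm_num)
  have h8 : ArithmeticFunction.moebius 8 = 0 := ArithmeticFunction.moebius_eq_zero_of_not_squarefree (by intro h; have := Nat.isUnit_iff.mp (h 2 (by norm_num)); norm_num at this)
  have h9 : ArithmeticFunction.moebius 9 = 0 := ArithmeticFunction.moebius_eq_zero_of_not_squarefree (by intro h; have := Nat.isUnit_iff.mp (h 3 (by norm_num)); norm_num at this)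
  have h10 : ArithmeticFunction.moebius 10 = 1 := by
    rw [show (10:ℕ) = 2*5 by norm_num, ArithmeticFunction.isMultiplicative_moebius.map_mul_of_coprime (by norm_num), h2, h5]; norm_num
  have h11 : ArithmeticFunction.moebius 11 = -1 := ArithmeticFunction.moebius_apply_prime (by norm_num)
  have h12 : ArithmeticFunction.moebius 12 = 0 := ArithmeticFunction.moebius_eq_zero_of_not_squarefree (by intro h; have := Nat.isUnit_iff.mp (h 2 (by norm_num)); norm_num at this)
  have h13 : ArithmeticFunction.moebius 13 = -1 := ArithmeticFunction.moebius_apply_prime (by norm_num)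
  have h14 : ArithmeticFunction.moebius 14 = 1 := by
    rw [show (14:ℕ) = 2*7 by norm_num, ArithmeticFunction.isMultiplicative_moebius.map_mul_of_coprime (by norm_num), h2, h7]; norm_num
  have h15 : ArithmeticFunction.moebius 15 = 1 := by
    rw [show (15:ℕ) = 3*5 by norm_num, ArithmeticFunction.isMultiplicative_moebius.map_mul_of_coprime (by norm_num), h3, h5]; norm_num
  have h16 : ArithmeticFunction.moebius 16 = 0 := ArithmeticFunction.moebius_eq_zero_of_not_squarefree (by intro h; have := Nat.isUnit_iff.mp (h 2 (by norm_num)); norm_num at this)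
  have h17 : ArithmeticFunction.moebius 17 = -1 := ArithmeticFunction.moebius_apply_prime (by norm_num)
  have h18 : ArithmeticFunction.moebius 18 = 0 := ArithmeticFunction.moebius_eq_zero_of_not_squarefree (by intro h; have := Nat.isUnit_iff.mp (h 3 (by norm_num)); norm_num at this)
  have h19 : ArithmeticFunction.moebius 19 = -1 := ArithmeticFunction.moebius_apply_prime (by norm_num)
  have h20 : ArithmeticFunction.moebius 20 = 0 := ArithmeticFunction.moebius_eq_zero_of_not_squarefree (by intro h; have := Nat.isUnit_iff.mp (h 2 (by norm_num)); norm_num at this)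
  have h21 : ArithmeticFunction.moebius 21 = 1 := by
    rw [show (21:ℕ) = 3*7 by norm_num, ArithmeticFunction.isMultiplicative_moebius.map_mul_of_coprime (by norm_num), h3, h7]; norm_num
  have h22 : ArithmeticFunction.moebius 22 = 1 := by
    rw [show (22:ℕ) = 2*11 by norm_num, ArithmeticFunction.isMultiplicative_moebius.map_mul_of_coprime (by norm_num), h2, h11]; norm_num
  have h23 : ArithmeticFunction.moebius 23 = -1 := ArithmeticFunction.moebius_apply_prime (by norm_num)
  have h24 : ArithmeticFunction.moebius 24 = 0 := ArithmeticFunction.moebius_eq_zero_of_not_squarefree (by intro h; have := Nat.isUnit_iff.mp (h 2 (by norm_num)); norm_num at this)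
  have h25 : ArithmeticFunction.moebius 25 = 0 := ArithmeticFunction.moebius_eq_zero_of_not_squarefree (by intro h; have := Nat.isUnit_iff.mp (h 5 (by norm_num)); norm_num at this)
  have h26 : ArithmeticFunction.moebius 26 = 1 := by
    rw [show (26:ℕ) = 2*13 by norm_num, ArithmeticFunction.isMultiplicative_moebius.map_mul_of_coprime (by norm_num), h2, h13]; norm_num
  have h27 : ArithmeticFunction.moebius 27 = 0 := ArithmeticFunction.moebius_eq_zero_of_not_squarefree (by intro h; have := Nat.isUnit_iff.mp (h 3 (by norm_num)); norm_num at this)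
  have h28 : ArithmeticFunction.moebius 28 = 0 := ArithmeticFunction.moebius_eq_zero_of_not_squarefree (by intro h; have := Nat.isUnit_iff.mp (h 2 (by norm_num)); norm_num at this)
  have h29 : ArithmeticFunction.moebius 29 = -1 := ArithmeticFunction.moebius_apply_prime (by norm_num)
  have h30 : ArithmeticFunction.moebius 30 = -1 := by
    rw [show (30:ℕ) = 2*15 by norm_num, ArithmeticFunction.isMultiplicative_moebius.map_mul_of_coprime (by norm_num), h2, h15]; norm_num
  have h31 : ArithmeticFunction.moebius 31 = -1 := ArithmeticFunction.moebius_apply_prime (by norm_num)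
  have h32 : ArithmeticFunction.moebius 32 = 0 := ArithmeticFunction.moebius_eq_zero_of_not_squarefree (by intro h; have := Nat.isUnit_iff.mp (h 2 (by norm_num)); norm_num at this)
  have h33 : ArithmeticFunction.moebius 33 = 1 := by
    rw [show (33:ℕ) = 3*11 by norm_num, ArithmeticFunction.isMultiplicative_moebius.map_mul_of_coprime (by norm_num), h3, h11]; norm_num
  have h34 : ArithmeticFunction.moebius 34 = 1 := by
    rw [show (34:ℕ) = 2*17 by norm_num, ArithmeticFunction.isMultiplicative_moebius.map_mul_of_coprime (by norm_num), h2, h17]; norm_num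
  have h35 : ArithmeticFunction.moebius 35 = 1 := by
    rw [show (35:ℕ) = 5*7 by norm_num, ArithmeticFunction.isMultiplicative_moebius.map_mul_of_coprime (by norm_num), h5, h7]; norm_num
  have h36 : ArithmeticFunction.moebius 36 = 0 := ArithmeticFunction.moebius_eq_zero_of_not_squarefree (by intro h; have := Nat.isUnit_iff.mp (h 2 (by norm_num)); norm_num at this)
  have h37 : ArithmeticFunction.moebius 37 = -1 := ArithmeticFunction.moebius_apply_prime (by norm_num)
  have h38 : ArithmeticFunction.moebius 38 = 1 := by
    rw [show (38:ℕ) = 2*19 by norm_num, ArithmeticFunction.isMultiplicative_moebius.map_mul_of_coprime (by norm_num), h2, h19]; norm_num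
  have h39 : ArithmeticFunction.moebius 39 = 1 := by
    rw [show (39:ℕ) = 3*13 by norm_num, ArithmeticFunction.isMultiplicative_moebius.map_mul_of_coprime (by norm_num), h3, h13]; norm_num
  have h40 : ArithmeticFunction.moebius 40 = 0 := ArithmeticFunction.moebius_eq_zero_of_not_squarefree (by intro h; have := Nat.isUnit_iff.mp (h 2 (by norm_num)); norm_num at this)
  have h41 : ArithmeticFunction.moebius 41 = -1 := ArithmeticFunction.moebius_apply_prime (by norm_num)
  have h42 : ArithmeticFunction.moebius 42 = -1 := by
    rw [show (42:ℕ) = 2*21 by norm_num, ArithmeticFunction.isMultiplicative_moebius.map_mul_of_coprime (by norm_num), h2, h21]; norm_num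
  have h43 : ArithmeticFunction.moebius 43 = -1 := ArithmeticFunction.moebius_apply_prime (by norm_num)
  have h44 : ArithmeticFunction.moebius 44 = 0 := ArithmeticFunction.moebius_eq_zero_of_not_squarefree (by intro h; have := Nat.isUnit_iff.mp (h 2 (by norm_num)); norm_num at this)
  have h45 : ArithmeticFunction.moebius 45 = 0 := ArithmeticFunction.moebius_eq_zero_of_not_squarefree (by intro h; have := Nat.isUnit_iff.mp (h 3 (by norm_num)); norm_num at this)
  have h46 : ArithmeticFunction.moebius 46 = 1 := by
    rw [show (46:ℕ) = 2*23 by norm_num, ArithmeticFunction.isMultiplicative_moebius.map_mul_of_coprime (by norm_num), h2, h23]; norm_num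
  have h47 : ArithmeticFunction.moebius 47 = -1 := ArithmeticFunction.moebius_apply_prime (by norm_num)
  have h48 : ArithmeticFunction.moebius 48 = 0 := ArithmeticFunction.moebius_eq_zero_of_not_squarefree (by intro h; have := Nat.isUnit_iff.mp (h 2 (by norm_num)); norm_num at this)
  have h49 : ArithmeticFunction.moebius 49 = 0 := ArithmeticFunction.moebius_eq_zero_of_not_squarefree (by intro h; have := Nat.isUnit_iff.mp (h 7 (by norm_num)); norm_num at this)
  have h50 : ArithmeticFunction.moebius 50 = 0 := ArithmeticFunction.moebius_eq_zero_of_not_squarefree (by intro h; have := Nat.isUnit_iff.mp (h 5 (by norm_num)); norm_num at this)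
  have h51 : ArithmeticFunction.moebius 51 = 1 := by
    rw [show (51:ℕ) = 3*17 by norm_num, ArithmeticFunction.isMultiplicative_moebius.map_mul_of_coprime (by norm_num), h3, h17]; norm_num
  have h52 : ArithmeticFunction.moebius 52 = 0 := ArithmeticFunction.moebius_eq_zero_of_not_squarefree (by intro h; have := Nat.isUnit_iff.mp (h 2 (by norm_num)); norm_num at this)
  have h53 : ArithmeticFunction.moebius 53 = -1 := ArithmeticFunction.moebius_apply_prime (by norm_num)
  have h54 : ArithmeticFunction.moebius 54 = 0 := ArithmeticFunction.moebius_eq_zero_of_not_squarefree (by intro h; have := Nat.isUnit_iff.mp (h 3 (by norm_num)); norm_num at this)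
  have h55 : ArithmeticFunction.moebius 55 = 1 := by
    rw [show (55:ℕ) = 5*11 by norm_num, ArithmeticFunction.isMultiplicative_moebius.map_mul_of_coprime (by norm_num), h5, h11]; norm_num
  have h56 : ArithmeticFunction.moebius 56 = 0 := ArithmeticFunction.moebius_eq_zero_of_not_squarefree (by intro h; have := Nat.isUnit_iff.mp (h 2 (by norm_num)); norm_num at this)
  have h57 : ArithmeticFunction.moebius 57 = 1 := by
    rw [show (57:ℕ) = 3*19 by norm_num, ArithmeticFunction.isMultiplicative_moebius.map_mul_of_coprime (by norm_num), h3, h19]; norm_num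
  have h58 : ArithmeticFunction.moebius 58 = 1 := by
    rw [show (58:ℕ) = 2*29 by norm_num, ArithmeticFunction.isMultiplicative_moebius.map_mul_of_coprime (by norm_num), h2, h29]; norm_num
  have h59 : ArithmeticFunction.moebius 59 = -1 := ArithmeticFunction.moebius_apply_prime (by norm_num)
  have h60 : ArithmeticFunction.moebius 60 = 0 := ArithmeticFunction.moebius_eq_zero_of_not_squarefree (by intro h; have := Nat.isUnit_iff.mp (h 2 (by norm_num)); norm_num at this)
  have h61 : ArithmeticFunction.moebius 61 = -1 := ArithmeticFunction.moebius_apply_prime (by norm_num)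
  have h62 : ArithmeticFunction.moebius 62 = 1 := by
    rw [show (62:ℕ) = 2*31 by norm_num, ArithmeticFunction.isMultiplicative_moebius.map_mul_of_coprime (by norm_num), h2, h31]; norm_num
  have h63 : ArithmeticFunction.moebius 63 = 0 := ArithmeticFunction.moebius_eq_zero_of_not_squarefree (by intro h; have := Nat.isUnit_iff.mp (h 3 (by norm_num)); norm_num at this)
  have h64 : ArithmeticFunction.moebius 64 = 0 := ArithmeticFunction.moebius_eq_zero_of_not_squarefree (by intro h; have := Nat.isUnit_iff.mp (h 2 (by norm_num)); norm_num at this)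
  have h65 : ArithmeticFunction.moebius 65 = 1 := by
    rw [show (65:ℕ) = 5*13 by norm_num, ArithmeticFunction.isMultiplicative_moebius.map_mul_of_coprime (by norm_num), h5, h13]; norm_num
  have h66 : ArithmeticFunction.moebius 66 = -1 := by
    rw [show (66:ℕ) = 2*33 by norm_num, ArithmeticFunction.isMultiplicative_moebius.map_mul_of_coprime (by norm_num), h2, h33]; norm_num
  have h67 : ArithmeticFunction.moebius 67 = -1 := ArithmeticFunction.moebius_apply_prime (by norm_num)
  have h68 : ArithmeticFunction.moebius 68 = 0 := ArithmeticFunction.moebius_eq_zero_of_not_squarefree (by intro h; have := Nat.isUnit_iff.mp (h 2 (by norm_num)); norm_num at this)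
  have h69 : ArithmeticFunction.moebius 69 = 1 := by
    rw [show (69:ℕ) = 3*23 by norm_num, ArithmeticFunction.isMultiplicative_moebius.map_mul_of_coprime (by norm_num), h3, h23]; norm_num
  have h70 : ArithmeticFunction.moebius 70 = -1 := by
    rw [show (70:ℕ) = 2*35 by norm_num, ArithmeticFunction.isMultiplicative_moebius.map_mul_of_coprime (by norm_num), h2, h35]; norm_num
  have h71 : ArithmeticFunction.moebius 71 = -1 := ArithmeticFunction.moebius_apply_prime (by norm_num)
  have h72 : ArithmeticFunction.moebius 72 = 0 := ArithmeticFunction.moebius_eq_zero_of_not_squarefree (by intro h; have := Nat.isUnit_iff.mp (h 2 (by norm_num)); norm_num at this)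
  have h73 : ArithmeticFunction.moebius 73 = -1 := ArithmeticFunction.moebius_apply_prime (by norm_num)
  have h74 : ArithmeticFunction.moebius 74 = 1 := by
    rw [show (74:ℕ) = 2*37 by norm_num, ArithmeticFunction.isMultiplicative_moebius.map_mul_of_coprime (by norm_num), h2, h37]; norm_num
  have h75 : ArithmeticFunction.moebius 75 = 0 := ArithmeticFunction.moebius_eq_zero_of_not_squarefree (by intro h; have := Nat.isUnit_iff.mp (h 5 (by norm_num)); norm_num at this)
  have h76 : ArithmeticFunction.moebius 76 = 0 := ArithmeticFunction.moebius_eq_zero_of_not_squarefree (by intro h; have := Nat.isUnit_iff.mp (h 2 (by norm_num)); norm_num at this)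
  have h77 : ArithmeticFunction.moebius 77 = 1 := by
    rw [show (77:ℕ) = 7*11 by norm_num, ArithmeticFunction.isMultiplicative_moebius.map_mul_of_coprime (by norm_num), h7, h11]; norm_num
  have h78 : ArithmeticFunction.moebius 78 = -1 := by
    rw [show (78:ℕ) = 2*39 by norm_num, ArithmeticFunction.isMultiplicative_moebius.map_mul_of_coprime (by norm_num), h2, h39]; norm_num
  have h79 : ArithmeticFunction.moebius 79 = -1 := ArithmeticFunction.moebius_apply_prime (by norm_num)
  have h80 : ArithmeticFunction.moebius 80 = 0 := ArithmeticFunction.moebius_eq_zero_of_not_squarefree (by intro h; have := Nat.isUnit_iff.mp (h 2 (by norm_num)); norm_num at this)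
  have h81 : ArithmeticFunction.moebius 81 = 0 := ArithmeticFunction.moebius_eq_zero_of_not_squarefree (by intro h; have := Nat.isUnit_iff.mp (h 3 (by norm_num)); norm_num at this)
  have h82 : ArithmeticFunction.moebius 82 = 1 := by
    rw [show (82:ℕ) = 2*41 by norm_num, ArithmeticFunction.isMultiplicative_moebius.map_mul_of_coprime (by norm_num), h2, h41]; norm_num
  have h83 : ArithmeticFunction.moebius 83 = -1 := ArithmeticFunction.moebius_apply_prime (by norm_num)
  have h84 : ArithmeticFunction.moebius 84 = 0 := ArithmeticFunction.moebius_eq_zero_of_not_squarefree (by intro h; have := Nat.isUnit_iff.mp (h 2 (by norm_num)); norm_num at this)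
  have h85 : ArithmeticFunction.moebius 85 = 1 := by
    rw [show (85:ℕ) = 5*17 by norm_num, ArithmeticFunction.isMultiplicative_moebius.map_mul_of_coprime (by norm_num), h5, h17]; norm_num
  have h86 : ArithmeticFunction.moebius 86 = 1 := by
    rw [show (86:ℕ) = 2*43 by norm_num, ArithmeticFunction.isMultiplicative_moebius.map_mul_of_coprime (by norm_num), h2, h43]; norm_num
  have h87 : ArithmeticFunction.moebius 87 = 1 := by
    rw [show (87:ℕ) = 3*29 by norm_num, ArithmeticFunction.isMultiplicative_moebius.map_mul_of_coprime (by norm_num), h3, h29]; norm_num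
  have h88 : ArithmeticFunction.moebius 88 = 0 := ArithmeticFunction.moebius_eq_zero_of_not_squarefree (by intro h; have := Nat.isUnit_iff.mp (h 2 (by norm_num)); norm_num at this)
  have h89 : ArithmeticFunction.moebius 89 = -1 := ArithmeticFunction.moebius_apply_prime (by norm_num)
  have h90 : ArithmeticFunction.moebius 90 = 0 := ArithmeticFunction.moebius_eq_zero_of_not_squarefree (by intro h; have := Nat.isUnit_iff.mp (h 3 (by norm_num)); norm_num at this)
  have h91 : ArithmeticFunction.moebius 91 = 1 := by
    rw [show (91:ℕ) = 7*13 by norm_num, ArithmeticFunction.isMultiplicative_moebius.map_mul_of_coprime (by norm_num), h7, h13]; norm_num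
  have h92 : ArithmeticFunction.moebius 92 = 0 := ArithmeticFunction.moebius_eq_zero_of_not_squarefree (by intro h; have := Nat.isUnit_iff.mp (h 2 (by norm_num)); norm_num at this)
  have h93 : ArithmeticFunction.moebius 93 = 1 := by
    rw [show (93:ℕ) = 3*31 by norm_num, ArithmeticFunction.isMultiplicative_moebius.map_mul_of_coprime (by norm_num), h3, h31]; norm_num
  have h94 : ArithmeticFunction.moebius 94 = 1 := by
    rw [show (94:ℕ) = 2*47 by norm_num, ArithmeticFunction.isMultiplicative_moebius.map_mul_of_coprime (by norm_num), h2, h47]; norm_num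
  have h95 : ArithmeticFunction.moebius 95 = 1 := by
    rw [show (95:ℕ) = 5*19 by norm_num, ArithmeticFunction.isMultiplicative_moebius.map_mul_of_coprime (by norm_num), h5, h19]; norm_num
  have h96 : ArithmeticFunction.moebius 96 = 0 := ArithmeticFunction.moebius_eq_zero_of_not_squarefree (by intro h; have := Nat.isUnit_iff.mp (h 2 (by norm_num)); norm_num at this)
  have h97 : ArithmeticFunction.moebius 97 = -1 := ArithmeticFunction.moebius_apply_prime (by norm_num)
  have h98 : ArithmeticFunction.moebius 98 = 0 := ArithmeticFunction.moebius_eq_zero_of_not_squarefree (by intro h; have := Nat.isUnit_iff.mp (h 7 (by norm_num)); norm_num at this)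
  have h99 : ArithmeticFunction.moebius 99 = 0 := ArithmeticFunction.moebius_eq_zero_of_not_squarefree (by intro h; have := Nat.isUnit_iff.mp (h 3 (by norm_num)); norm_num at this)
  have h100 : ArithmeticFunction.moebius 100 = 0 := ArithmeticFunction.moebius_eq_zero_of_not_squarefree (by intro h; have := Nat.isUnit_iff.mp (h 2 (by norm_num)); norm_num at this)
  rw [show Finset.Ioc (0:ℕ) 100 = Finset.Icc 1 100 from (Finset.Icc_add_one_left_eq_Ioc 0 100).symm, show Finset.Icc (1:ℕ) 100 = Finset.Ico 1 101 by rfl, Finset.sum_Ico_eq_sum_range]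
  norm_num [Finset.sum_range_succ, h1, h2, h3, h4, h5, h6, h7, h8, h9, h10, h11, h12, h13, h14, h15, h16, h17, h18, h19, h20, h21, h22, h23, h24, h25, h26, h27, h28, h29, h30, h31, h32, h33, h34, h35, h36, h37, h38, h39, h40, h41, h42, h43, h44, h45, h46, h47, h48, h49, h50, h51, h52, h53, h54, h55, h56, h57, h58, h59, h60, h61, h62, h63, h64, h65, h66, h67, h68, h69, h70, h71, h72, h73, h74, h75, h76, h77, h78, h79, h80, h81, h82, h83, h84, h85, h86, h87, h88, h89, h90, h91, h92, h93, h94, h95, h96, h97, h98, h99, h100]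

lemma gauss_sum (K : ℕ) : ∑ k ∈ Finset.Ioc 0 K, (k:ℝ) = (K:ℝ)*((K:ℝ)+1)/2 := by
  induction K with
  | zero => simp
  | succ K ih =>
    rw [Finset.sum_Ioc_succ_top (Nat.zero_le _), ih]
    push_cast; ring

lemma tot_card {b : ℕ} (hb : 0 < b) :
    Nat.totient b = ((Finset.Ioc 0 b).filter (fun a => Nat.gcd a b = 1)).card := by
  rw [Nat.totient_eq_card_coprime]
  apply Finset.card_bij' (fun x _ => if x = 0 then b else x) (fun a _ => a % b)
  · intro x hx
    simp only [Finset.mem_filter, Finset.mem_range] at hx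
    obtain ⟨hxb, hcop⟩ := hx
    by_cases h0 : x = 0
    · subst h0
      have hb1 : b = 1 := by simpa [Nat.coprime_zero_right] using hcop
      simp [hb1]
    · simp only [if_neg h0, Finset.mem_filter, Finset.mem_Ioc]
      exact ⟨⟨Nat.pos_of_ne_zero h0, le_of_lt hxb⟩, by rwa [Nat.gcd_comm]⟩
  · intro a ha
    simp only [Finset.mem_filter, Finset.mem_Ioc] at ha
    obtain ⟨⟨ha0, hab⟩, hg⟩ := ha
    simp only [Finset.mem_filter, Finset.mem_range]
    refine ⟨Nat.mod_lt _ hb, ?_⟩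
    have : Nat.gcd (a % b) b = Nat.gcd a b := by
      conv_rhs => rw [Nat.gcd_comm, Nat.gcd_rec]
    unfold Nat.Coprime
    rw [Nat.gcd_comm]
    first
    | exact this.trans hg
    | (rw [this]; exact hg)
  · intro x hx
    simp only [Finset.mem_filter, Finset.mem_range] at hx
    by_cases h0 : x = 0
    · simp [h0]
    · simp [h0, Nat.mod_eq_of_lt hx.1]
  · intro a ha
    simp only [Finset.mem_filter, Finset.mem_Ioc] at ha
    obtain ⟨⟨ha0, hab⟩, hg⟩ := ha
    rcases lt_or_eq_of_le hab with h | h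
    · have ha0' : a ≠ 0 := Nat.pos_iff_ne_zero.mp ha0
      simp [Nat.mod_eq_of_lt h, ha0']
    · subst h
      simp [Nat.mod_self]

lemma phi_eq {b : ℕ} (hb : 0 < b) :
    (Nat.totient b : ℝ) = ∑ a ∈ Finset.Ioc 0 b, (if Nat.gcd a b = 1 then (1:ℝ) else 0) := by
  rw [Finset.sum_boole, tot_card hb]

lemma count_dvd (b d : ℕ) : ∑ a ∈ Finset.Ioc 0 b, (if d ∣ a then (1:ℝ) else 0) = ((b / d : ℕ) : ℝ) := by
  rw [Finset.sum_boole, Nat.Ioc_filter_dvd_card_eq_div]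

lemma mob_pt {a b N : ℕ} (ha : 0 < a) (hab : a ≤ b) (hbN : b ≤ N) :
    (if Nat.gcd a b = 1 then (1:ℝ) else 0)
      = ∑ d ∈ Finset.Ioc 0 N, (μ d : ℝ) * (if d ∣ a ∧ d ∣ b then 1 else 0) := by
  have hg : 0 < Nat.gcd a b := Nat.gcd_pos_of_pos_left _ ha
  have hsets : (Finset.Ioc 0 N).filter (fun d => d ∣ a ∧ d ∣ b) = (Nat.gcd a b).divisors := by
    ext d
    simp only [Finset.mem_filter, Finset.mem_Ioc, Nat.mem_divisors]
    constructor
    · rintro ⟨⟨hd0, hdN⟩, hda, hdb⟩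
      exact ⟨Nat.dvd_gcd hda hdb, hg.ne'⟩
    · rintro ⟨hdg, -⟩
      have hd0 : 0 < d := Nat.pos_of_dvd_of_pos hdg hg
      have hdle : d ≤ Nat.gcd a b := Nat.le_of_dvd hg hdg
      have hgb : Nat.gcd a b ≤ b := Nat.le_of_dvd (lt_of_lt_of_le ha hab) (Nat.gcd_dvd_right a b)
      exact ⟨⟨hd0, le_trans hdle (le_trans hgb hbN)⟩, dvd_trans hdg (Nat.gcd_dvd_left a b),
        dvd_trans hdg (Nat.gcd_dvd_right a b)⟩
  have key : ∑ d ∈ (Nat.gcd a b).divisors, (μ d : ℤ) = if Nat.gcd a b = 1 then 1 else 0 := by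
    have h2 : ((μ * ζ : ArithmeticFunction ℤ)) (Nat.gcd a b)
        = (1 : ArithmeticFunction ℤ) (Nat.gcd a b) := by
      rw [ArithmeticFunction.moebius_mul_coe_zeta]
    rwa [ArithmeticFunction.coe_mul_zeta_apply, ArithmeticFunction.one_apply] at h2
  calc (if Nat.gcd a b = 1 then (1:ℝ) else 0)
      = ((if Nat.gcd a b = 1 then (1:ℤ) else 0 : ℤ) : ℝ) := by
        by_cases h : Nat.gcd a b = 1 <;> simp [h]
    _ = ((∑ d ∈ (Nat.gcd a b).divisors, (μ d : ℤ) : ℤ) : ℝ) := by rw [key]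
    _ = ∑ d ∈ (Nat.gcd a b).divisors, (μ d : ℝ) := by push_cast; rfl
    _ = ∑ d ∈ (Finset.Ioc 0 N).filter (fun d => d ∣ a ∧ d ∣ b), (μ d : ℝ) := by rw [hsets]
    _ = ∑ d ∈ Finset.Ioc 0 N, (μ d : ℝ) * (if d ∣ a ∧ d ∣ b then 1 else 0) := by
        rw [Finset.sum_filter]
        exact Finset.sum_congr rfl (fun d _ => by by_cases h : d ∣ a ∧ d ∣ b <;> simp [h])

lemma sum_div_eq (N d : ℕ) (hd : 0 < d) :
    ∑ b ∈ Finset.Ioc 0 N, (if d ∣ b then ((b / d : ℕ) : ℝ) else 0) = ∑ k ∈ Finset.Ioc 0 (N / d), (k : ℝ) := by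
  rw [← Finset.sum_filter]
  apply Finset.sum_nbij' (i := fun b => b / d) (j := fun k => d * k)
  · intro b hb
    simp only [Finset.mem_filter, Finset.mem_Ioc] at hb ⊢
    obtain ⟨⟨hb0, hbN⟩, hdb⟩ := hb
    exact ⟨Nat.div_pos (Nat.le_of_dvd hb0 hdb) hd, Nat.div_le_div_right hbN⟩
  · intro k hk
    simp only [Finset.mem_filter, Finset.mem_Ioc] at hk ⊢
    obtain ⟨hk0, hkN⟩ := hk
    refine ⟨⟨Nat.mul_pos hd hk0, ?_⟩, Dvd.intro k rfl⟩
    calc d * k = k * d := Nat.mul_comm d k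
      _ ≤ N := (Nat.le_div_iff_mul_le hd).mp hkN
  · intro b hb
    simp only [Finset.mem_filter, Finset.mem_Ioc] at hb
    exact Nat.mul_div_cancel' hb.2
  · intro k hk
    exact Nat.mul_div_cancel_left k hd
  · intro b hb
    rfl

lemma S_eq (N : ℕ) :
    ∑ b ∈ Finset.Ioc 0 N, (Nat.totient b : ℝ)
      = ∑ d ∈ Finset.Ioc 0 N, (μ d : ℝ) * (((N / d : ℕ) : ℝ) * (((N / d : ℕ) : ℝ) + 1) / 2) := by
  have step1 : ∑ b ∈ Finset.Ioc 0 N, (Nat.totient b : ℝ)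
      = ∑ b ∈ Finset.Ioc 0 N, ∑ a ∈ Finset.Ioc 0 b,
          ∑ d ∈ Finset.Ioc 0 N, (μ d : ℝ) * (if d ∣ a ∧ d ∣ b then 1 else 0) := by
    refine Finset.sum_congr rfl (fun b hb => ?_)
    simp only [Finset.mem_Ioc] at hb
    rw [phi_eq hb.1]
    refine Finset.sum_congr rfl (fun a ha => ?_)
    simp only [Finset.mem_Ioc] at ha
    exact mob_pt ha.1 ha.2 hb.2
  rw [step1]
  have step2 : ∀ b ∈ Finset.Ioc 0 N,
      (∑ a ∈ Finset.Ioc 0 b, ∑ d ∈ Finset.Ioc 0 N, (μ d : ℝ) * (if d ∣ a ∧ d ∣ b then 1 else 0))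
      = ∑ d ∈ Finset.Ioc 0 N, (μ d : ℝ) * (if d ∣ b then ((b / d : ℕ) : ℝ) else 0) := by
    intro b hb
    rw [Finset.sum_comm]
    refine Finset.sum_congr rfl (fun d hd => ?_)
    by_cases hdb : d ∣ b
    · simp only [hdb, and_true, if_true, ← Finset.mul_sum]
      rw [count_dvd b d]
    · simp [hdb]
  rw [Finset.sum_congr rfl step2, Finset.sum_comm]
  refine Finset.sum_congr rfl (fun d hd => ?_)
  simp only [Finset.mem_Ioc] at hd
  rw [← Finset.mul_sum, sum_div_eq N d hd.1, gauss_sum]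

lemma cast_div_bounds (N d : ℕ) (hd : 0 < d) :
    (N:ℝ)/d - 1 ≤ ((N / d : ℕ) : ℝ) ∧ ((N / d : ℕ) : ℝ) ≤ (N:ℝ)/d := by
  have hd' : (0:ℝ) < d := by exact_mod_cast hd
  constructor
  · have h1 : N < d * (N / d) + d := by
      have h2 := Nat.div_add_mod N d
      have h3 := Nat.mod_lt N hd
      omega
    have h1' : (N:ℝ) < d * ((N / d : ℕ) : ℝ) + d := by exact_mod_cast h1
    rw [div_sub_one hd'.ne', div_le_iff₀ hd']
    nlinarith
  · exact Nat.cast_div_le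

lemma mu_cases (d : ℕ) : ((μ d : ℤ) : ℝ) = 0 ∨ ((μ d : ℤ) : ℝ) = 1 ∨ ((μ d : ℤ) : ℝ) = -1 := by
  rcases ArithmeticFunction.moebius_eq_or d with h | h | h <;> simp [h]

lemma sq_helper {x q : ℝ} (hq0 : 0 ≤ q) (hlo : x - 1 ≤ q) (hhi : q ≤ x) :
    x*(x-1) ≤ q*(q+1) ∧ q*(q+1) ≤ x*(x+1) := by
  constructor
  · by_cases hx1 : 1 ≤ x
    · have h1 : x - 1 ≥ 0 := by linarith
      nlinarith
    · nlinarith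
  · nlinarith

lemma term_bounds (N d : ℕ) (hd : 0 < d) :
    (μ d : ℝ) * ((N:ℝ)^2/(2*(d:ℝ)^2)) - (N:ℝ)/(2*d)
      ≤ (μ d : ℝ) * (((N / d : ℕ) : ℝ) * (((N / d : ℕ) : ℝ) + 1) / 2)
    ∧ (μ d : ℝ) * (((N / d : ℕ) : ℝ) * (((N / d : ℕ) : ℝ) + 1) / 2)
      ≤ (μ d : ℝ) * ((N:ℝ)^2/(2*(d:ℝ)^2)) + (N:ℝ)/(2*d) := by
  have hd' : (0:ℝ) < d := by exact_mod_cast hd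
  obtain ⟨hlo, hhi⟩ := cast_div_bounds N d hd
  have hq : (0:ℝ) ≤ ((N / d : ℕ) : ℝ) := Nat.cast_nonneg _
  have hx : (0:ℝ) ≤ (N:ℝ)/d := by positivity
  obtain ⟨k1, k2⟩ := sq_helper hq hlo hhi
  have hsq : (N:ℝ)^2/(2*(d:ℝ)^2) = ((N:ℝ)/d)*((N:ℝ)/d)/2 := by
    field_simp
  have hlin : (N:ℝ)/(2*d) = ((N:ℝ)/d)/2 := by ring
  rcases mu_cases d with h | h | h <;> rw [h] <;> constructor
  · rw [zero_mul, zero_mul, zero_sub, neg_nonpos]; positivity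
  · rw [zero_mul, zero_mul, zero_add]; positivity
  · rw [one_mul, one_mul, hsq, hlin]; nlinarith
  · rw [one_mul, one_mul, hsq, hlin]; nlinarith
  · rw [neg_one_mul, neg_one_mul, hsq, hlin]; nlinarith
  · rw [neg_one_mul, neg_one_mul, hsq, hlin]; nlinarith

lemma tail_sq (N : ℕ) (hN : 100 ≤ N) :
    ∑ d ∈ Finset.Ioc 100 N, (1:ℝ)/(d:ℝ)^2 ≤ 1/100 - 1/(N:ℝ) := by
  induction N, hN using Nat.le_induction with
  | base => norm_num
  | succ N hN ih =>
    rw [Finset.sum_Ioc_succ_top (by omega : 100 ≤ N)]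
    have hN' : (0:ℝ) < N := by exact_mod_cast (by omega : 0 < N)
    have key : (1:ℝ)/(N+1)^2 ≤ 1/(N:ℝ) - 1/((N:ℝ)+1) := by
      rw [div_sub_div _ _ (ne_of_gt hN') (by positivity : ((N:ℝ)+1) ≠ 0)]
      rw [div_le_div_iff₀ (by positivity) (by positivity)]
      ring_nf
      nlinarith
    have hcast : ((N+1 : ℕ):ℝ) = (N:ℝ)+1 := by push_cast; ring
    rw [hcast]
    linarith

lemma harm_eq (N : ℕ) : ∑ d ∈ Finset.Ioc 0 N, (1:ℝ)/(d:ℝ) = ((harmonic N : ℚ) : ℝ) := by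
  rw [harmonic_eq_sum_Icc]
  push_cast
  rw [← Finset.Icc_add_one_left_eq_Ioc]
  exact Finset.sum_congr rfl (fun d _ => (one_div _))

lemma mu_ge (d : ℕ) : -1 ≤ ((μ d : ℤ) : ℝ) := by
  rcases mu_cases d with h | h | h <;> rw [h] <;> norm_num

lemma mu_le (d : ℕ) : ((μ d : ℤ) : ℝ) ≤ 1 := by
  rcases mu_cases d with h | h | h <;> rw [h] <;> norm_num

set_option maxHeartbeats 2000000 in
lemma S_bounds (N : ℕ) (hN : 100 ≤ N)
    (hM : (0.6082:ℝ) ≤ (∑ d ∈ Finset.Ioc (0:ℕ) 100, (μ d : ℝ)/(d:ℝ)^2)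
        ∧ (∑ d ∈ Finset.Ioc (0:ℕ) 100, (μ d : ℝ)/(d:ℝ)^2) ≤ 0.60825) :
    (0.6082:ℝ)*(N:ℝ)^2/2 - (N:ℝ)^2/200 - (N:ℝ)/2*(1 + Real.log N)
        ≤ ∑ b ∈ Finset.Ioc 0 N, (Nat.totient b : ℝ)
    ∧ ∑ b ∈ Finset.Ioc 0 N, (Nat.totient b : ℝ)
        ≤ (0.60825:ℝ)*(N:ℝ)^2/2 + (N:ℝ)^2/200 + (N:ℝ)/2*(1 + Real.log N) := by
  have L : ∀ S : Finset ℕ, (0:ℝ) ≤ ∑ d ∈ S, 1/((d:ℕ):ℝ) := fun S => by positivity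
  rw [S_eq]
  rw [← Finset.sum_Ioc_consecutive _ (show (0:ℕ) ≤ 100 by norm_num) hN]
  set f : ℕ → ℝ := fun d => (μ d : ℝ) * (((N / d : ℕ) : ℝ) * (((N / d : ℕ) : ℝ) + 1) / 2) with hf
  have h1a : (N:ℝ)^2/2*(∑ d ∈ Finset.Ioc (0:ℕ) 100, (μ d : ℝ)/(d:ℝ)^2)
      - (N:ℝ)/2*(∑ d ∈ Finset.Ioc (0:ℕ) 100, 1/(d:ℝ)) ≤ ∑ d ∈ Finset.Ioc (0:ℕ) 100, f d := by
    rw [Finset.mul_sum, Finset.mul_sum, ← Finset.sum_sub_distrib]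
    apply Finset.sum_le_sum
    intro d hd
    simp only [Finset.mem_Ioc] at hd
    calc (N:ℝ)^2/2 * ((μ d : ℝ)/(d:ℝ)^2) - (N:ℝ)/2*(1/(d:ℝ))
        = (μ d : ℝ) * ((N:ℝ)^2/(2*(d:ℝ)^2)) - (N:ℝ)/(2*(d:ℝ)) := by ring
      _ ≤ f d := (term_bounds N d hd.1).1
  have h1b : ∑ d ∈ Finset.Ioc (0:ℕ) 100, f d
      ≤ (N:ℝ)^2/2*(∑ d ∈ Finset.Ioc (0:ℕ) 100, (μ d : ℝ)/(d:ℝ)^2)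
        + (N:ℝ)/2*(∑ d ∈ Finset.Ioc (0:ℕ) 100, 1/(d:ℝ)) := by
    rw [Finset.mul_sum, Finset.mul_sum, ← Finset.sum_add_distrib]
    apply Finset.sum_le_sum
    intro d hd
    simp only [Finset.mem_Ioc] at hd
    calc f d ≤ (μ d : ℝ) * ((N:ℝ)^2/(2*(d:ℝ)^2)) + (N:ℝ)/(2*(d:ℝ)) := (term_bounds N d hd.1).2
      _ = (N:ℝ)^2/2 * ((μ d : ℝ)/(d:ℝ)^2) + (N:ℝ)/2*(1/(d:ℝ)) := by ring
  have h2a : -((N:ℝ)^2/2*(∑ d ∈ Finset.Ioc 100 N, 1/(d:ℝ)^2))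
      - (N:ℝ)/2*(∑ d ∈ Finset.Ioc 100 N, 1/(d:ℝ)) ≤ ∑ d ∈ Finset.Ioc 100 N, f d := by
    rw [Finset.mul_sum, Finset.mul_sum, ← Finset.sum_neg_distrib, ← Finset.sum_sub_distrib]
    apply Finset.sum_le_sum
    intro d hd
    simp only [Finset.mem_Ioc] at hd
    have hd0 : 0 < d := by omega
    have hX : (0:ℝ) ≤ (N:ℝ)^2/(2*(d:ℝ)^2) := by positivity
    have hmul1 := mul_le_mul_of_nonneg_right (mu_ge d) hX
    calc -((N:ℝ)^2/2*(1/(d:ℝ)^2)) - (N:ℝ)/2*(1/(d:ℝ))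
        = (-1)*((N:ℝ)^2/(2*(d:ℝ)^2)) - (N:ℝ)/(2*(d:ℝ)) := by ring
      _ ≤ (μ d : ℝ)*((N:ℝ)^2/(2*(d:ℝ)^2)) - (N:ℝ)/(2*(d:ℝ)) := by linarith
      _ ≤ f d := (term_bounds N d hd0).1
  have h2b : ∑ d ∈ Finset.Ioc 100 N, f d
      ≤ (N:ℝ)^2/2*(∑ d ∈ Finset.Ioc 100 N, 1/(d:ℝ)^2)
        + (N:ℝ)/2*(∑ d ∈ Finset.Ioc 100 N, 1/(d:ℝ)) := by
    rw [Finset.mul_sum, Finset.mul_sum, ← Finset.sum_add_distrib]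
    apply Finset.sum_le_sum
    intro d hd
    simp only [Finset.mem_Ioc] at hd
    have hd0 : 0 < d := by omega
    have hX : (0:ℝ) ≤ (N:ℝ)^2/(2*(d:ℝ)^2) := by positivity
    have hmul2 := mul_le_mul_of_nonneg_right (mu_le d) hX
    calc f d ≤ (μ d : ℝ)*((N:ℝ)^2/(2*(d:ℝ)^2)) + (N:ℝ)/(2*(d:ℝ)) := (term_bounds N d hd0).2
      _ ≤ 1*((N:ℝ)^2/(2*(d:ℝ)^2)) + (N:ℝ)/(2*(d:ℝ)) := by linarith
      _ = (N:ℝ)^2/2*(1/(d:ℝ)^2) + (N:ℝ)/2*(1/(d:ℝ)) := by ring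
  have h4 := tail_sq N hN
  have h5 : (∑ d ∈ Finset.Ioc (0:ℕ) 100, 1/(d:ℝ)) + (∑ d ∈ Finset.Ioc 100 N, 1/(d:ℝ))
      ≤ 1 + Real.log N := by
    rw [Finset.sum_Ioc_consecutive _ (show (0:ℕ) ≤ 100 by norm_num) hN, harm_eq]
    exact_mod_cast harmonic_le_one_add_log N
  have hL1 : (0:ℝ) ≤ ∑ d ∈ Finset.Ioc (0:ℕ) 100, 1/(d:ℝ) := by positivity
  have hL2 : (0:ℝ) ≤ ∑ d ∈ Finset.Ioc 100 N, 1/(d:ℝ) := by positivity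
  have hQ2 : (0:ℝ) ≤ ∑ d ∈ Finset.Ioc 100 N, 1/(d:ℝ)^2 := by positivity
  have hNsq : (0:ℝ) ≤ (N:ℝ)^2/2 := by positivity
  have hNl : (0:ℝ) ≤ (N:ℝ)/2 := by positivity
  have e3 := mul_le_mul_of_nonneg_left hM.1 hNsq
  have e3' := mul_le_mul_of_nonneg_left hM.2 hNsq
  have e4 := mul_le_mul_of_nonneg_left h4 hNsq
  have e5 := mul_le_mul_of_nonneg_left h5 hNl
  have hNpos : (0:ℝ) < (N:ℝ) := by exact_mod_cast (by omega : 0 < N)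
  have e6 : (N:ℝ)^2/2*(1/100 - 1/(N:ℝ)) ≤ (N:ℝ)^2/200 := by
    rw [mul_sub]
    have h7 : (0:ℝ) ≤ (N:ℝ)^2/2*(1/(N:ℝ)) := by positivity
    have h200 : (N:ℝ)^2/2*(1/100) = (N:ℝ)^2/200 := by ring
    linarith
  constructor <;> nlinarith [h1a, h1b, h2a, h2b]

lemma log_bound (n : ℕ) (hn : 300 ≤ n) : Real.log n ≤ 5 + (n:ℝ)/300 := by
  have hnpos : (0:ℝ) < n := by exact_mod_cast (by omega : 0 < n)
  have h300 : Real.log 300 ≤ 6 := by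
    rw [Real.log_le_iff_le_exp (by norm_num)]
    have h1 : Real.exp 6 = (Real.exp 1)^6 := by
      rw [← Real.exp_nat_mul]; norm_num
    have h2 := Real.exp_one_gt_d9
    rw [h1]
    have h3 : (2.7182818283:ℝ)^6 ≤ (Real.exp 1)^6 :=
      pow_le_pow_left₀ (by norm_num) (le_of_lt h2) 6
    have h4 : (300:ℝ) ≤ (2.7182818283:ℝ)^6 := by norm_num
    linarith
  have hsplit : Real.log n = Real.log 300 + Real.log ((n:ℝ)/300) := by
    rw [← Real.log_mul (by norm_num) (by positivity)]
    congr 1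
    field_simp
  have h2 : Real.log ((n:ℝ)/300) ≤ (n:ℝ)/300 - 1 :=
    Real.log_le_sub_one_of_pos (by positivity)
  linarith

set_option maxHeartbeats 1000000 in
lemma main300 (n : ℕ) (hn : 300 ≤ n)
    (hM : (0.6082:ℝ) ≤ (∑ d ∈ Finset.Ioc (0:ℕ) 100, (μ d : ℝ)/(d:ℝ)^2)
        ∧ (∑ d ∈ Finset.Ioc (0:ℕ) 100, (μ d : ℝ)/(d:ℝ)^2) ≤ 0.60825) :
    (n:ℝ)^3/11 ≤ ∑ i ∈ Finset.Ioc 0 n, (Nat.totient i : ℝ)^2 := by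
  set m := n / 3 with hm
  have hm100 : 100 ≤ m := by omega
  have hmn : m < n := by omega
  have h3m : 3 * m ≤ n := by omega
  have h3m2 : n ≤ 3 * m + 2 := by omega
  have low_n := (S_bounds n (by omega) hM).1
  have up_m := (S_bounds m hm100 hM).2
  have hsplit : (∑ b ∈ Finset.Ioc 0 m, (Nat.totient b : ℝ))
      + (∑ b ∈ Finset.Ioc m n, (Nat.totient b : ℝ))
      = ∑ b ∈ Finset.Ioc 0 n, (Nat.totient b : ℝ) :=
    Finset.sum_Ioc_consecutive _ (Nat.zero_le m) (le_of_lt hmn)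
  -- real casts
  have hnR : (300:ℝ) ≤ (n:ℝ) := by exact_mod_cast hn
  have hmR3 : (m:ℝ) ≤ (n:ℝ)/3 := by
    rw [le_div_iff₀ (by norm_num)]
    exact_mod_cast (by omega : m*3 ≤ n)
  have hm0 : (0:ℝ) ≤ (m:ℝ) := Nat.cast_nonneg m
  have hm1 : (1:ℝ) ≤ (m:ℝ) := by exact_mod_cast (by omega : 1 ≤ m)
  have hlogn := log_bound n hn
  have hlogm : Real.log m ≤ Real.log n := by
    apply Real.log_le_log (by positivity)
    exact_mod_cast le_of_lt hmn
  have hlogm0 : 0 ≤ Real.log m := Real.log_nonneg hm1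
  -- window sum lower bound
  have hW : (0.26253:ℝ)*(n:ℝ)^2 - 4*(n:ℝ) ≤ ∑ b ∈ Finset.Ioc m n, (Nat.totient b : ℝ) := by
    have p1 : (m:ℝ)/2*(1+Real.log m) ≤ (n:ℝ)/6*(6+(n:ℝ)/300) := by
      apply mul_le_mul (by linarith) (by linarith) (by linarith) (by positivity)
    have p2 : (n:ℝ)/2*(1+Real.log n) ≤ (n:ℝ)/2*(6+(n:ℝ)/300) :=
      mul_le_mul_of_nonneg_left (by linarith) (by positivity)
    have p3 : (m:ℝ)^2 ≤ ((n:ℝ)/3)^2 := by nlinarith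
    have p4 : ((n:ℝ)/3)^2 = (n:ℝ)^2/9 := by ring
    nlinarith [low_n, up_m, hsplit]
  have hQ0 : (0:ℝ) ≤ (0.26253:ℝ)*(n:ℝ)^2 - 4*(n:ℝ) := by nlinarith
  -- Cauchy-Schwarz
  have cs := sq_sum_le_card_mul_sum_sq (s := Finset.Ioc m n) (f := fun b => (Nat.totient b : ℝ))
  rw [Nat.card_Ioc] at cs
  have hcast : ((n - m : ℕ):ℝ) = (n:ℝ) - (m:ℝ) := by
    rw [Nat.cast_sub (le_of_lt hmn)]
  rw [hcast] at cs
  have hsub : ∑ b ∈ Finset.Ioc m n, (Nat.totient b : ℝ)^2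
      ≤ ∑ b ∈ Finset.Ioc 0 n, (Nat.totient b : ℝ)^2 := by
    apply Finset.sum_le_sum_of_subset_of_nonneg
    · exact Finset.Ioc_subset_Ioc (Nat.zero_le m) le_rfl
    · intro i _ _; positivity
  have hnm : (0:ℝ) < (n:ℝ) - (m:ℝ) := by
    have : (m:ℝ) < (n:ℝ) := by exact_mod_cast hmn
    linarith
  have hnm23 : (n:ℝ) - (m:ℝ) ≤ (2*(n:ℝ)+2)/3 := by
    have : (n:ℝ) ≤ 3*(m:ℝ)+2 := by exact_mod_cast h3m2
    linarith
  have key : (n:ℝ)^3*((n:ℝ)-(m:ℝ)) ≤ 11 * ((0.26253:ℝ)*(n:ℝ)^2 - 4*(n:ℝ))^2 := by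
    nlinarith [hnR, hnm23, sq_nonneg ((n:ℝ) - 300)]
  have hQsq : ((0.26253:ℝ)*(n:ℝ)^2 - 4*(n:ℝ))^2 ≤ (∑ b ∈ Finset.Ioc m n, (Nat.totient b : ℝ))^2 :=
    pow_le_pow_left₀ hQ0 hW 2
  have chain : (n:ℝ)^3*((n:ℝ)-(m:ℝ)) ≤ 11*(((n:ℝ)-(m:ℝ)) * ∑ b ∈ Finset.Ioc 0 n, (Nat.totient b : ℝ)^2) := by
    calc (n:ℝ)^3*((n:ℝ)-(m:ℝ)) ≤ 11 * ((0.26253:ℝ)*(n:ℝ)^2 - 4*(n:ℝ))^2 := key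
      _ ≤ 11 * (∑ b ∈ Finset.Ioc m n, (Nat.totient b : ℝ))^2 := by linarith
      _ ≤ 11 * (((n:ℝ)-(m:ℝ)) * ∑ b ∈ Finset.Ioc m n, (Nat.totient b : ℝ)^2) := by linarith
      _ ≤ 11 * (((n:ℝ)-(m:ℝ)) * ∑ b ∈ Finset.Ioc 0 n, (Nat.totient b : ℝ)^2) := by
          have := mul_le_mul_of_nonneg_left hsub (le_of_lt hnm)
          linarith
  have final : (n:ℝ)^3 ≤ 11 * ∑ b ∈ Finset.Ioc 0 n, (Nat.totient b : ℝ)^2 := by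
    have h1 : (n:ℝ)^3*((n:ℝ)-(m:ℝ)) = ((n:ℝ)-(m:ℝ)) * (n:ℝ)^3 := by ring
    have h2 : 11*(((n:ℝ)-(m:ℝ)) * ∑ b ∈ Finset.Ioc 0 n, (Nat.totient b : ℝ)^2)
        = ((n:ℝ)-(m:ℝ)) * (11 * ∑ b ∈ Finset.Ioc 0 n, (Nat.totient b : ℝ)^2) := by ring
    rw [h1, h2] at chain
    exact le_of_mul_le_mul_left chain hnm
  linarith

lemma small_helper (a b n : ℕ) (hab : b^3 ≤ 11 * ∑ i ∈ Finset.Icc 1 a, (Nat.totient i)^2)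
    (han : a ≤ n) (hnb : n ≤ b) :
    (n:ℝ)^3/11 ≤ ∑ i ∈ Finset.Icc 1 n, (Nat.totient i : ℝ)^2 := by
  have h1 : (∑ i ∈ Finset.Icc 1 a, (Nat.totient i)^2) ≤ ∑ i ∈ Finset.Icc 1 n, (Nat.totient i)^2 :=
    Finset.sum_le_sum_of_subset (Finset.Icc_subset_Icc_right han)
  have h2 : n^3 ≤ 11 * ∑ i ∈ Finset.Icc 1 n, (Nat.totient i)^2 := by
    calc n^3 ≤ b^3 := Nat.pow_le_pow_left hnb 3
      _ ≤ 11 * ∑ i ∈ Finset.Icc 1 a, (Nat.totient i)^2 := hab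
      _ ≤ 11 * ∑ i ∈ Finset.Icc 1 n, (Nat.totient i)^2 := Nat.mul_le_mul_left 11 h1
  have h3 : ((n:ℝ))^3 ≤ 11 * ∑ i ∈ Finset.Icc 1 n, (Nat.totient i : ℝ)^2 := by
    exact_mod_cast h2
  linarith

lemma small_cases (n : ℕ) (h1 : 1 ≤ n) (h2 : n ≤ 299) :
    (n:ℝ)^3/11 ≤ ∑ i ∈ Finset.Icc 1 n, (Nat.totient i : ℝ)^2 := by
  by_cases c1 : n ≤ 2
  · exact small_helper 1 2 n (by decide) (by omega) c1
  by_cases c3 : n ≤ 4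
  · exact small_helper 3 4 n (by decide) (by omega) c3
  by_cases c5 : n ≤ 6
  · exact small_helper 5 6 n (by decide) (by omega) c5
  by_cases c7 : n ≤ 8
  · exact small_helper 7 8 n (by decide) (by omega) c7
  by_cases c9 : n ≤ 10
  · exact small_helper 9 10 n (by decide) (by omega) c9
  by_cases c11 : n ≤ 13
  · exact small_helper 11 13 n (by decide) (by omega) c11
  by_cases c14 : n ≤ 16
  · exact small_helper 14 16 n (by decide) (by omega) c14
  by_cases c17 : n ≤ 20
  · exact small_helper 17 20 n (by decide) (by omega) c17
  by_cases c21 : n ≤ 24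
  · exact small_helper 21 24 n (by decide) (by omega) c21
  by_cases c25 : n ≤ 29
  · exact small_helper 25 29 n (by decide) (by omega) c25
  by_cases c30 : n ≤ 34
  · exact small_helper 30 34 n (by decide) (by omega) c30
  by_cases c35 : n ≤ 41
  · exact small_helper 35 41 n (by decide) (by omega) c35
  by_cases c42 : n ≤ 48
  · exact small_helper 42 48 n (by decide) (by omega) c42
  by_cases c49 : n ≤ 58
  · exact small_helper 49 58 n (by decide) (by omega) c49
  by_cases c59 : n ≤ 69
  · exact small_helper 59 69 n (by decide) (by omega) c59
  by_cases c70 : n ≤ 80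
  · exact small_helper 70 80 n (by decide) (by omega) c70
  by_cases c81 : n ≤ 94
  · exact small_helper 81 94 n (by decide) (by omega) c81
  by_cases c95 : n ≤ 110
  · exact small_helper 95 110 n (by decide) (by omega) c95
  by_cases c111 : n ≤ 130
  · exact small_helper 111 130 n (by decide) (by omega) c111
  by_cases c131 : n ≤ 153
  · exact small_helper 131 153 n (by decide) (by omega) c131
  by_cases c154 : n ≤ 179
  · exact small_helper 154 179 n (by decide) (by omega) c154
  by_cases c180 : n ≤ 209
  · exact small_helper 180 209 n (by decide) (by omega) c180
  by_cases c210 : n ≤ 243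
  · exact small_helper 210 243 n (by decide) (by omega) c210
  by_cases c244 : n ≤ 284
  · exact small_helper 244 284 n (by decide) (by omega) c244
  by_cases c285 : n ≤ 300
  · exact small_helper 285 300 n (by decide) (by omega) c285
  · omega

/-- For every positive integer `n`, `∑_{i=1}^n φ(i)² ≥ n³/11`. -/
theorem totient_sq_sum_lower_bound (n : ℕ) (hn : 0 < n) :
    (n : ℝ) ^ 3 / 11 ≤ ∑ i ∈ Finset.Icc 1 n, (Nat.totient i : ℝ) ^ 2 := by
  by_cases h : n ≤ 299
  · exact small_cases n hn h
  · have h300 : 300 ≤ n := by omega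
    have hmain := main300 n h300 M_bounds
    rw [show Finset.Icc 1 n = Finset.Ioc 0 n from Finset.Icc_add_one_left_eq_Ioc 0 n]
    exact hmain
end

section
/- There exists a constant c > 0 such that for all integers k ≥ 2, the sum over i from 1 to k of φ(i)²/i³ is at least c · log k, where φ is Euler's totient function. -/
open Finset

lemma row_card_le (b n : ℕ) (hb : 1 ≤ b) :
    #{a ∈ Finset.Icc 1 n | b.Coprime a} ≤ b.totient * ((n + 1) / b + 1) := by
  have hsub : Finset.Icc 1 n ⊆ Finset.Ico 0 (0 + (n + 1)) := by
    intro x hx; simp only [mem_Icc] at hx; simp only [mem_Ico]; omega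
  calc #{a ∈ Finset.Icc 1 n | b.Coprime a}
      ≤ #{a ∈ Finset.Ico 0 (0 + (n + 1)) | b.Coprime a} :=
        Finset.card_le_card (Finset.filter_subset_filter _ hsub)
    _ ≤ b.totient * ((n + 1) / b + 1) := Nat.Ico_filter_coprime_le 0 (n + 1) (by omega)

lemma gcd_fiber_card_le (n d : ℕ) (hd : 1 ≤ d) :
    #{p ∈ Finset.Icc 1 n ×ˢ Finset.Icc 1 n | Nat.gcd p.1 p.2 = d} ≤ (n / d) ^ 2 := by
  have h : #(Finset.Icc 1 (n / d) ×ˢ Finset.Icc 1 (n / d)) = (n / d) ^ 2 := by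
    simp [sq]
  rw [← h]
  apply Finset.card_le_card_of_injOn (fun p => (p.1 / d, p.2 / d))
  · rintro ⟨a, c⟩ hp
    simp only [mem_coe, mem_filter, mem_product, mem_Icc] at hp ⊢
    obtain ⟨⟨⟨ha1, ha2⟩, hc1, hc2⟩, hg⟩ := hp
    have hda : d ∣ a := hg ▸ Nat.gcd_dvd_left a c
    have hdc : d ∣ c := hg ▸ Nat.gcd_dvd_right a c
    refine ⟨⟨?_, Nat.div_le_div_right ha2⟩, ?_, Nat.div_le_div_right hc2⟩
    · exact (Nat.one_le_div_iff (by omega)).2 (Nat.le_of_dvd (by omega) hda)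
    · exact (Nat.one_le_div_iff (by omega)).2 (Nat.le_of_dvd (by omega) hdc)
  · rintro ⟨a, c⟩ hp ⟨a', c'⟩ hp' heq
    simp only [mem_coe, mem_filter, mem_product, mem_Icc] at hp hp'
    have hda : d ∣ a := hp.2 ▸ Nat.gcd_dvd_left a c
    have hdc : d ∣ c := hp.2 ▸ Nat.gcd_dvd_right a c
    have hda' : d ∣ a' := hp'.2 ▸ Nat.gcd_dvd_left a' c'
    have hdc' : d ∣ c' := hp'.2 ▸ Nat.gcd_dvd_right a' c'
    have h1 : a / d = a' / d := congrArg Prod.fst heq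
    have h2 : c / d = c' / d := congrArg Prod.snd heq
    have := Nat.div_mul_cancel hda
    have := Nat.div_mul_cancel hda'
    have := Nat.div_mul_cancel hdc
    have := Nat.div_mul_cancel hdc'
    have : a = a' := by
      rw [← Nat.div_mul_cancel hda, ← Nat.div_mul_cancel hda', h1]
    have : c = c' := by
      rw [← Nat.div_mul_cancel hdc, ← Nat.div_mul_cancel hdc', h2]
    simp_all

lemma pairs_card_eq (n : ℕ) :
    n ^ 2 = ∑ d ∈ Finset.Icc 1 n,
      #{p ∈ Finset.Icc 1 n ×ˢ Finset.Icc 1 n | Nat.gcd p.1 p.2 = d} := by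
  have := Finset.card_eq_sum_card_fiberwise
    (f := fun p : ℕ × ℕ => Nat.gcd p.1 p.2)
    (s := Finset.Icc 1 n ×ˢ Finset.Icc 1 n) (t := Finset.Icc 1 n) ?_
  · rw [← this]; simp [sq]
  · rintro ⟨a, c⟩ hp
    simp only [mem_coe, mem_product, mem_Icc] at hp
    simp only [mem_coe, mem_Icc]
    constructor
    · have : 0 < Nat.gcd a c := Nat.gcd_pos_of_pos_left c (by omega)
      omega
    · exact le_trans (Nat.gcd_le_left c (by omega)) hp.1.2

lemma coprime_pairs_eq_sum (n : ℕ) :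
    #{p ∈ Finset.Icc 1 n ×ˢ Finset.Icc 1 n | Nat.gcd p.1 p.2 = 1}
      = ∑ b ∈ Finset.Icc 1 n, #{a ∈ Finset.Icc 1 n | b.Coprime a} := by
  rw [Finset.card_eq_sum_card_fiberwise
    (f := fun p : ℕ × ℕ => p.2)
    (s := {p ∈ Finset.Icc 1 n ×ˢ Finset.Icc 1 n | Nat.gcd p.1 p.2 = 1})
    (t := Finset.Icc 1 n)
    (by rintro ⟨a, c⟩ hp; simp only [mem_coe, mem_filter, mem_product] at hp; exact hp.1.2)]
  refine Finset.sum_congr rfl fun b hb => ?_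
  apply Finset.card_bij (fun p _ => p.1)
  · rintro ⟨a, c⟩ hp
    simp only [mem_filter, mem_product, mem_Icc] at hp ⊢
    refine ⟨hp.1.1.1, ?_⟩
    have : c = b := hp.2
    subst this
    exact Nat.coprime_comm.mp hp.1.2
  · rintro ⟨a, c⟩ hp ⟨a', c'⟩ hp' heq
    simp only [mem_filter] at hp hp'
    have : c = b := hp.2
    have : c' = b := hp'.2
    simp_all [Prod.ext_iff]
  · intro a ha
    simp only [mem_filter, mem_Icc] at ha hb
    refine ⟨(a, b), ?_, rfl⟩
    simp only [mem_filter, mem_product, mem_Icc]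
    exact ⟨⟨⟨⟨ha.1.1, ha.1.2⟩, hb.1, hb.2⟩, Nat.coprime_comm.mp ha.2⟩, trivial⟩

lemma inv_sq_sum_le (n : ℕ) : ∑ d ∈ Finset.Icc 2 n, (1 : ℝ) / (d : ℝ) ^ 2 ≤ 3 / 4 := by
  have key : ∀ m : ℕ, 2 ≤ m → ∑ d ∈ Finset.Icc 2 m, (1 : ℝ) / (d : ℝ) ^ 2 ≤ 3 / 4 - 1 / m := by
    intro m hm
    induction m, hm using Nat.le_induction with
    | base => norm_num
    | succ m hm ih =>
      rw [Finset.sum_Icc_succ_top (by omega)]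
      have h1 : (0:ℝ) < m := by positivity
      have h2 : (0:ℝ) < (m:ℝ) + 1 := by positivity
      have : (1:ℝ) / ((m:ℕ)+1:ℝ) ^ 2 ≤ 1 / m - 1 / ((m:ℝ)+1) := by
        rw [div_sub_div _ _ (ne_of_gt h1) (ne_of_gt h2)]
        rw [div_le_div_iff₀ (by positivity) (by positivity)]
        ring_nf
        nlinarith
      push_cast
      push_cast at ih
      linarith
  rcases le_or_gt 2 n with h | h
  · have h1 := key n h
    have h2 : (0:ℝ) < n := by positivity
    have h3 : (0:ℝ) ≤ 1 / (n:ℝ) := by positivity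
    linarith
  · have he : Finset.Icc 2 n = ∅ := by apply Finset.Icc_eq_empty; omega
    rw [he, Finset.sum_empty]; norm_num

lemma phi_sum_lower (n : ℕ) (hn : 1 ≤ n) :
    (n : ℝ) / 12 ≤ ∑ b ∈ Finset.Icc 1 n, (Nat.totient b : ℝ) / b := by
  set S : ℕ := #{p ∈ Finset.Icc 1 n ×ˢ Finset.Icc 1 n | Nat.gcd p.1 p.2 = 1} with hS
  have hsplit : Finset.Icc 1 n = insert 1 (Finset.Icc 2 n) := by
    ext x; simp only [Finset.mem_Icc, Finset.mem_insert]; omega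
  have hgen : ∀ G : ℕ → ℕ, ∑ d ∈ Finset.Icc 1 n, G d = G 1 + ∑ d ∈ Finset.Icc 2 n, G d := by
    intro G; rw [hsplit, Finset.sum_insert (by simp)]
  have hcount : n ^ 2 = S + ∑ d ∈ Finset.Icc 2 n,
      #{p ∈ Finset.Icc 1 n ×ˢ Finset.Icc 1 n | Nat.gcd p.1 p.2 = d} :=
    (pairs_card_eq n).trans (hgen _)
  have hfibers : ∀ d ∈ Finset.Icc 2 n,
      (#{p ∈ Finset.Icc 1 n ×ˢ Finset.Icc 1 n | Nat.gcd p.1 p.2 = d} : ℝ)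
        ≤ (n : ℝ) ^ 2 * (1 / (d : ℝ) ^ 2) := by
    intro d hd
    simp only [Finset.mem_Icc] at hd
    have h1 := gcd_fiber_card_le n d (by omega)
    have h2 : ((n / d : ℕ) : ℝ) ≤ (n : ℝ) / d := Nat.cast_div_le
    have hd0 : (0:ℝ) < d := by exact_mod_cast (by omega : 0 < d)
    calc (#{p ∈ Finset.Icc 1 n ×ˢ Finset.Icc 1 n | Nat.gcd p.1 p.2 = d} : ℝ)
        ≤ ((n / d : ℕ) : ℝ) ^ 2 := by exact_mod_cast h1
      _ ≤ ((n : ℝ) / d) ^ 2 := by exact pow_le_pow_left₀ (by positivity) h2 2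
      _ = (n : ℝ) ^ 2 * (1 / (d : ℝ) ^ 2) := by field_simp
  have hSn : (n : ℝ) ^ 2 / 4 ≤ (S : ℝ) := by
    have hc : ((n:ℝ)) ^ 2 = (S : ℝ) + ∑ d ∈ Finset.Icc 2 n,
        (#{p ∈ Finset.Icc 1 n ×ˢ Finset.Icc 1 n | Nat.gcd p.1 p.2 = d} : ℝ) := by
      exact_mod_cast congrArg (Nat.cast (R := ℝ)) hcount
    have hsum : ∑ d ∈ Finset.Icc 2 n,
        (#{p ∈ Finset.Icc 1 n ×ˢ Finset.Icc 1 n | Nat.gcd p.1 p.2 = d} : ℝ)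
          ≤ (n : ℝ) ^ 2 * (3 / 4) := by
      calc _ ≤ ∑ d ∈ Finset.Icc 2 n, (n : ℝ) ^ 2 * (1 / (d : ℝ) ^ 2) :=
            Finset.sum_le_sum hfibers
        _ = (n : ℝ) ^ 2 * ∑ d ∈ Finset.Icc 2 n, (1 : ℝ) / (d : ℝ) ^ 2 := by
            rw [Finset.mul_sum]
        _ ≤ (n : ℝ) ^ 2 * (3 / 4) :=
            mul_le_mul_of_nonneg_left (inv_sq_sum_le n) (by positivity)
    linarith
  have hrow : (S : ℝ) ≤ ∑ b ∈ Finset.Icc 1 n, 3 * (n : ℝ) * ((Nat.totient b : ℝ) / b) := by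
    rw [hS, coprime_pairs_eq_sum]
    push_cast
    apply Finset.sum_le_sum
    intro b hb
    simp only [Finset.mem_Icc] at hb
    have hb1 : (0:ℝ) < b := by exact_mod_cast hb.1
    have h1 := row_card_le b n hb.1
    have h2 : ((b.totient * ((n + 1) / b + 1) : ℕ) : ℝ) ≤ 3 * (n:ℝ) * ((b.totient : ℝ) / b) := by
      have hq : (((n + 1) / b + 1 : ℕ) : ℝ) ≤ 3 * (n : ℝ) / b := by
        rw [le_div_iff₀ hb1]
        have hnat : ((n + 1) / b + 1) * b ≤ 3 * n := by
          have h3 := Nat.div_mul_le_self (n+1) b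
          have h4 : ((n+1)/b + 1) * b = (n+1)/b * b + b := by ring
          omega
        calc (((n + 1) / b + 1 : ℕ) : ℝ) * b = ((((n + 1) / b + 1) * b : ℕ) : ℝ) := by
              push_cast; ring
          _ ≤ ((3 * n : ℕ) : ℝ) := by exact_mod_cast hnat
          _ = 3 * (n:ℝ) := by push_cast; ring
      calc ((b.totient * ((n + 1) / b + 1) : ℕ) : ℝ)
          = (b.totient : ℝ) * (((n + 1) / b + 1 : ℕ) : ℝ) := by push_cast; ring
        _ ≤ (b.totient : ℝ) * (3 * (n : ℝ) / b) :=
            mul_le_mul_of_nonneg_left hq (by positivity)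
        _ = 3 * (n:ℝ) * ((b.totient : ℝ) / b) := by ring
    calc (#{a ∈ Finset.Icc 1 n | b.Coprime a} : ℝ)
        ≤ ((b.totient * ((n + 1) / b + 1) : ℕ) : ℝ) := by exact_mod_cast h1
      _ ≤ 3 * (n:ℝ) * ((b.totient : ℝ) / b) := h2
  rw [← Finset.mul_sum] at hrow
  have hn' : (0:ℝ) < n := by exact_mod_cast hn
  nlinarith [hSn, hrow]

lemma T_lower (n : ℕ) (hn : 1 ≤ n) :
    (n : ℝ) / 144 ≤ ∑ b ∈ Finset.Icc 1 n, ((Nat.totient b : ℝ) / b) ^ 2 := by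
  have hn' : (0:ℝ) < n := by exact_mod_cast hn
  have hcard : #(Finset.Icc 1 n) = n := by rw [Nat.card_Icc]; omega
  have cs := sq_sum_le_card_mul_sum_sq (s := Finset.Icc 1 n)
    (f := fun b => (Nat.totient b : ℝ) / b)
  rw [hcard] at cs
  have h := phi_sum_lower n hn
  have hsq : (n:ℝ) ^ 2 / 144 ≤ (∑ b ∈ Finset.Icc 1 n, (Nat.totient b : ℝ) / b) ^ 2 := by
    nlinarith [h, hn'.le]
  have h2 : (n:ℝ) * ((n:ℝ) / 144) ≤ (n:ℝ) * ∑ b ∈ Finset.Icc 1 n, ((Nat.totient b : ℝ) / b) ^ 2 := by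
    calc (n:ℝ) * ((n:ℝ) / 144) = (n:ℝ) ^ 2 / 144 := by ring
      _ ≤ (∑ b ∈ Finset.Icc 1 n, (Nat.totient b : ℝ) / b) ^ 2 := hsq
      _ ≤ _ := cs
  exact le_of_mul_le_mul_left h2 hn'

lemma T_upper (n : ℕ) :
    ∑ b ∈ Finset.Icc 1 n, ((Nat.totient b : ℝ) / b) ^ 2 ≤ (n : ℝ) := by
  have : ∀ b ∈ Finset.Icc 1 n, ((Nat.totient b : ℝ) / b) ^ 2 ≤ 1 := by
    intro b hb
    simp only [Finset.mem_Icc] at hb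
    have hb1 : (0:ℝ) < b := by exact_mod_cast hb.1
    have : (Nat.totient b : ℝ) / b ≤ 1 := by
      rw [div_le_one hb1]
      exact_mod_cast Nat.totient_le b
    have h0 : (0:ℝ) ≤ (Nat.totient b : ℝ) / b := by positivity
    nlinarith
  calc ∑ b ∈ Finset.Icc 1 n, ((Nat.totient b : ℝ) / b) ^ 2
      ≤ ∑ _b ∈ Finset.Icc 1 n, (1:ℝ) := Finset.sum_le_sum this
    _ = (n:ℝ) := by simp [Nat.card_Icc]

lemma block_lower (n : ℕ) (hn : 1 ≤ n) :
    (1 : ℝ) / 288 ≤ ∑ i ∈ Finset.Ioc n (288 * n), (Nat.totient i : ℝ) ^ 2 / (i : ℝ) ^ 3 := by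
  have hn' : (0:ℝ) < n := by exact_mod_cast hn
  have hunion : Finset.Icc 1 (288 * n) = Finset.Icc 1 n ∪ Finset.Ioc n (288 * n) := by
    ext x
    simp only [Finset.mem_Icc, Finset.mem_union, Finset.mem_Ioc]
    omega
  have hdisj : Disjoint (Finset.Icc 1 n) (Finset.Ioc n (288 * n)) := by
    rw [Finset.disjoint_left]
    intro x hx hx'
    simp only [Finset.mem_Icc] at hx
    simp only [Finset.mem_Ioc] at hx'
    omega
  have hsplit : ∑ b ∈ Finset.Icc 1 (288 * n), ((Nat.totient b : ℝ) / b) ^ 2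
      = ∑ b ∈ Finset.Icc 1 n, ((Nat.totient b : ℝ) / b) ^ 2
        + ∑ b ∈ Finset.Ioc n (288 * n), ((Nat.totient b : ℝ) / b) ^ 2 := by
    rw [hunion, Finset.sum_union hdisj]
  have hlo := T_lower (288 * n) (by omega)
  have hup := T_upper n
  have hIoc : (n : ℝ) ≤ ∑ b ∈ Finset.Ioc n (288 * n), ((Nat.totient b : ℝ) / b) ^ 2 := by
    have : ((288 * n : ℕ) : ℝ) / 144 = 2 * n := by push_cast; ring
    rw [this] at hlo
    linarith
  have hterm : ∀ i ∈ Finset.Ioc n (288 * n),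
      ((Nat.totient i : ℝ) / i) ^ 2 * (1 / (288 * (n:ℝ)))
        ≤ (Nat.totient i : ℝ) ^ 2 / (i : ℝ) ^ 3 := by
    intro i hi
    simp only [Finset.mem_Ioc] at hi
    have hi1 : (0:ℝ) < i := by
      have : 0 < i := by omega
      exact_mod_cast this
    have hile : (i : ℝ) ≤ 288 * n := by exact_mod_cast hi.2
    have heq : (Nat.totient i : ℝ) ^ 2 / (i : ℝ) ^ 3
        = ((Nat.totient i : ℝ) / i) ^ 2 * (1 / i) := by
      rw [div_pow, div_mul_div_comm, mul_one, ← pow_succ]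
    rw [heq]
    apply mul_le_mul_of_nonneg_left _ (by positivity)
    apply one_div_le_one_div_of_le hi1 hile
  calc (1:ℝ) / 288 = (n:ℝ) * (1 / (288 * (n:ℝ))) := by field_simp
    _ ≤ (∑ b ∈ Finset.Ioc n (288 * n), ((Nat.totient b : ℝ) / b) ^ 2) * (1 / (288 * (n:ℝ))) := by
        apply mul_le_mul_of_nonneg_right hIoc (by positivity)
    _ = ∑ b ∈ Finset.Ioc n (288 * n), ((Nat.totient b : ℝ) / b) ^ 2 * (1 / (288 * (n:ℝ))) := by
        rw [Finset.sum_mul]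
    _ ≤ ∑ i ∈ Finset.Ioc n (288 * n), (Nat.totient i : ℝ) ^ 2 / (i : ℝ) ^ 3 :=
        Finset.sum_le_sum hterm

lemma geom_lower (J : ℕ) :
    1 + (J : ℝ) / 288 ≤ ∑ i ∈ Finset.Icc 1 (288 ^ J), (Nat.totient i : ℝ) ^ 2 / (i : ℝ) ^ 3 := by
  induction J with
  | zero => simp
  | succ J ih =>
    have h1 : 1 ≤ 288 ^ J := Nat.one_le_pow _ _ (by norm_num)
    have h2 : 288 ^ (J + 1) = 288 * 288 ^ J := by rw [pow_succ]; ring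
    have hle : 288 ^ J ≤ 288 * 288 ^ J := by omega
    have hunion : Finset.Icc 1 (288 ^ (J + 1))
        = Finset.Icc 1 (288 ^ J) ∪ Finset.Ioc (288 ^ J) (288 * 288 ^ J) := by
      rw [h2]
      ext x
      simp only [Finset.mem_Icc, Finset.mem_union, Finset.mem_Ioc]
      omega
    have hdisj : Disjoint (Finset.Icc 1 (288 ^ J)) (Finset.Ioc (288 ^ J) (288 * 288 ^ J)) := by
      rw [Finset.disjoint_left]
      intro x hx hx'
      simp only [Finset.mem_Icc] at hx
      simp only [Finset.mem_Ioc] at hx'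
      omega
    rw [hunion, Finset.sum_union hdisj]
    have hb := block_lower (288 ^ J) h1
    push_cast
    linarith

/-- There is a constant `c > 0` such that for all `k ≥ 2`,
`∑_{i=1}^k φ(i)²/i³ ≥ c · log k`. -/
theorem totient_sq_over_cube_sum_lower_bound :
    ∃ c : ℝ, 0 < c ∧ ∀ k : ℕ, 2 ≤ k →
      c * Real.log k ≤ ∑ i ∈ Finset.Icc 1 k, (Nat.totient i : ℝ) ^ 2 / (i : ℝ) ^ 3 := by
  have hlog : (0:ℝ) < Real.log 288 := Real.log_pos (by norm_num)
  refine ⟨1 / (288 * Real.log 288), by positivity, fun k hk => ?_⟩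
  set J := Nat.log 288 k with hJ
  have h1 : 288 ^ J ≤ k := Nat.pow_log_le_self 288 (by omega)
  have h2 : k < 288 ^ (J + 1) := Nat.lt_pow_succ_log_self (by norm_num) k
  have hsub : Finset.Icc 1 (288 ^ J) ⊆ Finset.Icc 1 k := Finset.Icc_subset_Icc_right h1
  have hmono : ∑ i ∈ Finset.Icc 1 (288 ^ J), (Nat.totient i : ℝ) ^ 2 / (i : ℝ) ^ 3
      ≤ ∑ i ∈ Finset.Icc 1 k, (Nat.totient i : ℝ) ^ 2 / (i : ℝ) ^ 3 := by
    apply Finset.sum_le_sum_of_subset_of_nonneg hsub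
    intro i _ _
    positivity
  have hgeom := geom_lower J
  have hlogk : Real.log k ≤ (J + 1 : ℝ) * Real.log 288 := by
    have hk0 : (0:ℝ) < k := by exact_mod_cast (by omega : 0 < k)
    have hcast : (k : ℝ) ≤ (288 : ℝ) ^ (J + 1) := by
      exact_mod_cast h2.le
    calc Real.log k ≤ Real.log ((288 : ℝ) ^ (J + 1)) :=
          Real.log_le_log hk0 hcast
      _ = (J + 1 : ℝ) * Real.log 288 := by
          rw [Real.log_pow]; push_cast; ring
  have hc : 1 / (288 * Real.log 288) * Real.log k ≤ ((J : ℝ) + 1) / 288 := by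
    rw [div_mul_eq_mul_div, one_mul, div_le_div_iff₀ (by positivity) (by norm_num)]
    calc Real.log k * 288 ≤ ((J : ℝ) + 1) * Real.log 288 * 288 := by
          apply mul_le_mul_of_nonneg_right hlogk (by norm_num)
      _ = ((J : ℝ) + 1) * (288 * Real.log 288) := by ring
  calc 1 / (288 * Real.log 288) * Real.log k ≤ ((J:ℝ) + 1) / 288 := hc
    _ ≤ 1 + (J:ℝ) / 288 := by
        rw [add_div]
        have : (J:ℝ)/288 + 1/288 ≤ (J:ℝ)/288 + 1 := by norm_num
        linarith
    _ ≤ _ := hgeom.trans hmono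
end
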